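/- There exists a constant C>0 such that for every finite signed regular Borel measure μ on the closed half plane, the function Kμ(x)=∫ ∇⊥_x D(x,y) dμ(y) is a measurable vector field on ℝ²₊ belonging to weak-L², with weak-L² quasinorm bound sup_{λ>0} λ · (volume{x∈ℝ²₊ : |Kμ(x)|>λ})^{1/2} ≤ C‖μ‖_M. -/

import Mathlib

open MeasureTheory Real
open scoped ENNReal

noncomputable section

/-- The open upper half plane ℝ²₊ = {x : x₂ > 0}. -/
def upperHalf : Set (ℝ × ℝ) := {x | 0 < x.2}

/-- 2D heat kernel Γ(x,t) = (4πt)⁻¹ exp(−|x|²/(4t)). -/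
def heatK (x : ℝ × ℝ) (t : ℝ) : ℝ :=
  (4 * π * t)⁻¹ * Real.exp (-(x.1 ^ 2 + x.2 ^ 2) / (4 * t))

/-- 1D heat kernel Γ₀(r,t) = (4πt)^{-1/2} exp(−r²/(4t)). -/
def heatK1 (r t : ℝ) : ℝ :=
  (Real.sqrt (4 * π * t))⁻¹ * Real.exp (-r ^ 2 / (4 * t))

/-- ∂²_{z₁} E(z) = (z₁² − z₂²)/(2π|z|⁴), for E(z) = −(2π)⁻¹ log|z|. -/
def d2E (z : ℝ × ℝ) : ℝ :=
  (z.1 ^ 2 - z.2 ^ 2) / (2 * π * (z.1 ^ 2 + z.2 ^ 2) ^ 2)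

/-- Poisson kernel P_s(r) = s/(π(r²+s²)). -/
def Pker (s r : ℝ) : ℝ := s / (π * (r ^ 2 + s ^ 2))

/-- Conjugate Poisson kernel Q_s(r) = r/(π(r²+s²)). -/
def Qker (s r : ℝ) : ℝ := r / (π * (r ^ 2 + s ^ 2))

/-- ∇⊥E(z) = (∂₂E(z), −∂₁E(z)) for E(z) = −(2π)⁻¹ log|z|. -/
def gradPerpE (z : ℝ × ℝ) : ℝ × ℝ :=
  (-z.2 / (2 * π * (z.1 ^ 2 + z.2 ^ 2)), z.1 / (2 * π * (z.1 ^ 2 + z.2 ^ 2)))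

/-- The Biot–Savart kernel ∇⊥_x D(x,y) = ∇⊥E(x−y) − ∇⊥E(x−y*). -/
def bsKernel (x y : ℝ × ℝ) : ℝ × ℝ :=
  gradPerpE (x.1 - y.1, x.2 - y.2) - gradPerpE (x.1 - y.1, x.2 + y.2)

/-- Integral of a real function against a finite signed measure (via Jordan decomposition). -/
def sInt (μ : SignedMeasure (ℝ × ℝ)) (f : ℝ × ℝ → ℝ) : ℝ :=
  (∫ y, f y ∂μ.toJordanDecomposition.posPart) - ∫ y, f y ∂μ.toJordanDecomposition.negPart

/-- Integral of a vector-valued function against a finite signed measure. -/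
def sIntV (μ : SignedMeasure (ℝ × ℝ)) (f : ℝ × ℝ → ℝ × ℝ) : ℝ × ℝ :=
  (∫ y, f y ∂μ.toJordanDecomposition.posPart) - ∫ y, f y ∂μ.toJordanDecomposition.negPart

/-- Total variation norm ‖μ‖_M of a finite signed measure. -/
def normM (μ : SignedMeasure (ℝ × ℝ)) : ℝ := (μ.totalVariation Set.univ).toReal

/-- The vorticity kernel W(x,y,t). -/
def Wk (x y : ℝ × ℝ) (t : ℝ) : ℝ :=
  heatK (x.1 - y.1, x.2 - y.2) t + heatK (x.1 - y.1, x.2 + y.2) t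
    + 4 * ∫ z₂ in (0:ℝ)..y.2, ∫ z₁ : ℝ, heatK (x.1 - z₁, x.2 + z₂) t * d2E (z₁ - y.1, z₂ - y.2)
    - 2 * heatK1 x.2 t * ∫ z₁ : ℝ, heatK1 (x.1 - z₁) t * Pker y.2 (z₁ - y.1)

/-- T(t)ω₀(x) = ∫ W(x,y,t) dω₀(y) for a finite signed measure ω₀. -/
def Tsg (ω₀ : SignedMeasure (ℝ × ℝ)) (t : ℝ) (x : ℝ × ℝ) : ℝ :=
  sInt ω₀ (fun y => Wk x y t)

/-- The boundary trace operator T₁μ(x₁) = π⁻¹ ∫ y₂/((x₁−y₁)²+y₂²) dμ(y). -/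
def T1op (μ : SignedMeasure (ℝ × ℝ)) (x₁ : ℝ) : ℝ :=
  π⁻¹ * sInt μ (fun y => y.2 / ((x₁ - y.1) ^ 2 + y.2 ^ 2))

lemma measurable_bsKernel : Measurable (fun p : (ℝ × ℝ) × (ℝ × ℝ) => bsKernel p.1 p.2) := by
  unfold bsKernel gradPerpE
  fun_prop

lemma gpE_bound {u c d : ℝ} (hd : 0 < d) (hq : d ^ 2 ≤ u ^ 2 + c ^ 2) :
    ‖gradPerpE (u, c)‖ ≤ 1 / (2 * d) := by
  have hq0 : 0 < u ^ 2 + c ^ 2 := lt_of_lt_of_le (by positivity) hq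
  have hpi : (1:ℝ) ≤ π := by have := Real.pi_gt_three; linarith
  have key : ∀ a : ℝ, a ^ 2 ≤ u ^ 2 + c ^ 2 →
      |a / (2 * π * (u ^ 2 + c ^ 2))| ≤ 1 / (2 * d) := by
    intro a ha
    have hden : (0:ℝ) < 2 * π * (u ^ 2 + c ^ 2) :=
      mul_pos (by positivity) hq0
    rw [abs_div, abs_of_pos hden, div_le_div_iff₀ hden (by positivity)]
    have h1 : |a| * d ≤ u ^ 2 + c ^ 2 := by
      nlinarith [sq_nonneg (|a| - d), sq_abs a, abs_nonneg a]
    nlinarith [abs_nonneg a, mul_nonneg (sub_nonneg.mpr hpi) hq0.le]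
  rw [Prod.norm_def]
  apply max_le
  · exact key (-c) (by nlinarith)
  · exact key u (by nlinarith)

lemma bsKernel_bound {x y : ℝ × ℝ} (hx : 0 < x.2) (hy : 0 ≤ y.2) :
    ENNReal.ofReal ‖bsKernel x y‖ ≤ (ENNReal.ofReal (dist x y))⁻¹ := by
  rcases eq_or_ne x y with rfl | hxy
  · simp
  · have hd : 0 < dist x y := dist_pos.mpr hxy
    set d := dist x y with hdd
    have hdist : d = max |x.1 - y.1| |x.2 - y.2| := by
      rw [hdd, Prod.dist_eq, Real.dist_eq, Real.dist_eq]
    have hd2 : d ^ 2 ≤ (x.1 - y.1) ^ 2 + (x.2 - y.2) ^ 2 := by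
      rw [hdist]
      rcases max_cases |x.1 - y.1| |x.2 - y.2| with ⟨h1, _⟩ | ⟨h1, _⟩ <;> rw [h1] <;>
        nlinarith [sq_abs (x.1 - y.1), sq_abs (x.2 - y.2), sq_nonneg (x.1 - y.1),
          sq_nonneg (x.2 - y.2)]
    have hd2' : d ^ 2 ≤ (x.1 - y.1) ^ 2 + (x.2 + y.2) ^ 2 := by nlinarith
    have hdne : d ≠ 0 := ne_of_gt hd
    have hnorm : ‖bsKernel x y‖ ≤ 1 / d := by
      have h1 := gpE_bound hd hd2
      have h2 := gpE_bound hd hd2'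
      calc ‖bsKernel x y‖ ≤ ‖gradPerpE (x.1 - y.1, x.2 - y.2)‖
            + ‖gradPerpE (x.1 - y.1, x.2 + y.2)‖ := norm_sub_le _ _
        _ ≤ 1 / (2 * d) + 1 / (2 * d) := add_le_add h1 h2
        _ = 1 / d := by field_simp; norm_num
    calc ENNReal.ofReal ‖bsKernel x y‖ ≤ ENNReal.ofReal (1 / d) :=
          ENNReal.ofReal_le_ofReal hnorm
      _ = (ENNReal.ofReal d)⁻¹ := by
          rw [one_div, ENNReal.ofReal_inv_of_pos hd]

lemma volume_singleton_R2 (y : ℝ × ℝ) : volume ({y} : Set (ℝ × ℝ)) = 0 := by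
  have : ({y} : Set (ℝ × ℝ)) = {y.1} ×ˢ {y.2} := by simp
  rw [this, Measure.volume_eq_prod, Measure.prod_prod]
  simp

lemma ball_lintegral (y : ℝ × ℝ) {ρ : ℝ} (hρ : 0 ≤ ρ) :
    ∫⁻ x in Metric.ball y ρ, (ENNReal.ofReal (dist x y))⁻¹ ≤ ENNReal.ofReal (16 * ρ) := by
  rcases eq_or_lt_of_le hρ with rfl | hρ'
  · simp [Metric.ball_zero]
  set A : ℕ → Set (ℝ × ℝ) := fun k => {x | ρ / 2 ^ (k + 1) < dist x y ∧ dist x y ≤ ρ / 2 ^ k}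
    with hA
  have hcover : Metric.ball y ρ ⊆ {y} ∪ ⋃ k, A k := by
    intro x hx
    rcases eq_or_ne x y with rfl | hxy
    · exact Or.inl rfl
    · right
      have hd : 0 < dist x y := dist_pos.mpr hxy
      have hdρ : dist x y < ρ := Metric.mem_ball.mp hx
      have hex : ∃ n, ρ / 2 ^ (n + 1) < dist x y := by
        obtain ⟨n, hn⟩ := pow_unbounded_of_one_lt (ρ / dist x y) (one_lt_two (α := ℝ))
        refine ⟨n, ?_⟩
        rw [div_lt_iff₀ (by positivity)]
        rw [div_lt_iff₀ hd] at hn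
        calc ρ < 2 ^ n * dist x y := hn
          _ ≤ 2 ^ (n + 1) * dist x y := by
              gcongr
              · norm_num
              · omega
          _ = dist x y * 2 ^ (n + 1) := mul_comm _ _
      classical
      refine Set.mem_iUnion.mpr ⟨Nat.find hex, Nat.find_spec hex, ?_⟩
      rcases Nat.eq_zero_or_pos (Nat.find hex) with h0 | h0
      · rw [h0]; simpa using hdρ.le
      · have := Nat.find_min hex (Nat.sub_lt h0 one_pos)
        push_neg at this
        have h1 : Nat.find hex - 1 + 1 = Nat.find hex := Nat.succ_pred_eq_of_pos h0
        rwa [h1] at this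
  have hAk : ∀ k, ∫⁻ x in A k, (ENNReal.ofReal (dist x y))⁻¹
      ≤ ENNReal.ofReal (8 * ρ * (2⁻¹ : ℝ) ^ k) := by
    intro k
    have hpos : (0:ℝ) < ρ / 2 ^ (k + 1) := by positivity
    have step1 : ∫⁻ x in A k, (ENNReal.ofReal (dist x y))⁻¹
        ≤ ∫⁻ _ in A k, (ENNReal.ofReal (ρ / 2 ^ (k + 1)))⁻¹ := by
      apply setLIntegral_mono measurable_const
      intro x hx
      exact ENNReal.inv_le_inv.mpr (ENNReal.ofReal_le_ofReal hx.1.le)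
    have step2 : A k ⊆ Metric.closedBall y (ρ / 2 ^ k) := fun x hx => Metric.mem_closedBall.mpr hx.2
    have hvol : volume (A k) ≤ ENNReal.ofReal (2 * (ρ / 2 ^ k)) * ENNReal.ofReal (2 * (ρ / 2 ^ k)) := by
      refine le_trans (measure_mono step2) ?_
      have : Metric.closedBall y (ρ / 2 ^ k)
          = Metric.closedBall y.1 (ρ / 2 ^ k) ×ˢ Metric.closedBall y.2 (ρ / 2 ^ k) := by
        rw [← closedBall_prod_same]
      rw [this, Measure.volume_eq_prod, Measure.prod_prod, Real.volume_closedBall, Real.volume_closedBall]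
    calc ∫⁻ x in A k, (ENNReal.ofReal (dist x y))⁻¹
        ≤ (ENNReal.ofReal (ρ / 2 ^ (k + 1)))⁻¹ * volume (A k) := by
          rw [← setLIntegral_const]; exact step1
      _ ≤ ENNReal.ofReal ((ρ / 2 ^ (k + 1))⁻¹) *
            (ENNReal.ofReal (2 * (ρ / 2 ^ k)) * ENNReal.ofReal (2 * (ρ / 2 ^ k))) := by
          rw [← ENNReal.ofReal_inv_of_pos hpos]
          exact mul_le_mul_right hvol _
      _ = ENNReal.ofReal ((ρ / 2 ^ (k + 1))⁻¹ * (2 * (ρ / 2 ^ k) * (2 * (ρ / 2 ^ k)))) := by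
          rw [← ENNReal.ofReal_mul (by positivity), ← ENNReal.ofReal_mul (by positivity)]
      _ = ENNReal.ofReal (8 * ρ * (2⁻¹ : ℝ) ^ k) := by
          congr 1
          have h2k : (2:ℝ) ^ k ≠ 0 := by positivity
          rw [inv_pow]
          field_simp
          ring
  calc ∫⁻ x in Metric.ball y ρ, (ENNReal.ofReal (dist x y))⁻¹
      ≤ ∫⁻ x in {y} ∪ ⋃ k, A k, (ENNReal.ofReal (dist x y))⁻¹ := lintegral_mono_set hcover
    _ ≤ (∫⁻ x in ({y} : Set (ℝ × ℝ)), (ENNReal.ofReal (dist x y))⁻¹)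
        + ∫⁻ x in ⋃ k, A k, (ENNReal.ofReal (dist x y))⁻¹ := lintegral_union_le _ _ _
    _ ≤ 0 + ∑' k, ∫⁻ x in A k, (ENNReal.ofReal (dist x y))⁻¹ := by
        gcongr
        · have : (volume.restrict ({y} : Set (ℝ × ℝ))) = 0 := by
            rw [Measure.restrict_eq_zero]; exact volume_singleton_R2 y
          rw [this, lintegral_zero_measure]
        · exact lintegral_iUnion_le _ _
    _ ≤ 0 + ∑' k, ENNReal.ofReal (8 * ρ * (2⁻¹ : ℝ) ^ k) := by gcongr; exact hAk _
    _ = ENNReal.ofReal (16 * ρ) := by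
        rw [zero_add]
        have heach : ∀ k : ℕ, ENNReal.ofReal (8 * ρ * (2⁻¹ : ℝ) ^ k)
            = ENNReal.ofReal (8 * ρ) * (2⁻¹ : ℝ≥0∞) ^ k := by
          intro k
          rw [ENNReal.ofReal_mul (by positivity), ENNReal.ofReal_pow (by norm_num)]
          congr 2
          rw [ENNReal.ofReal_inv_of_pos (by norm_num)]
          norm_num
        simp_rw [heach]
        rw [ENNReal.tsum_mul_left, ENNReal.tsum_geometric]
        have : ((1:ℝ≥0∞) - 2⁻¹)⁻¹ = 2 := by
          rw [show ((1:ℝ≥0∞) - 2⁻¹) = 2⁻¹ by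
            rw [ENNReal.sub_eq_of_eq_add (by norm_num)]
            rw [ENNReal.inv_two_add_inv_two]]
          rw [inv_inv]
        rw [this, show (16 * ρ) = (8 * ρ) * 2 by ring,
          ENNReal.ofReal_mul (by positivity : (0:ℝ) ≤ 8 * ρ)]
        norm_num

lemma key_lintegral (y : ℝ × ℝ) (E : Set (ℝ × ℝ)) :
    ∫⁻ x in E, (ENNReal.ofReal (dist x y))⁻¹
      ≤ 17 * (volume E) ^ ((1:ℝ)/2) := by
  set V := volume E with hV
  rcases eq_or_ne V ∞ with hVtop | hVtop
  · rw [hVtop, ENNReal.top_rpow_of_pos (by norm_num)]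
    simp
  set ρ := Real.sqrt V.toReal with hρdef
  have hρ : 0 ≤ ρ := Real.sqrt_nonneg _
  have hVρ : V = ENNReal.ofReal (ρ ^ 2) := by
    rw [hρdef, Real.sq_sqrt ENNReal.toReal_nonneg, ENNReal.ofReal_toReal hVtop]
  have hhalf : V ^ ((1:ℝ)/2) = ENNReal.ofReal ρ := by
    rw [hρdef, Real.sqrt_eq_rpow, ENNReal.toReal_rpow, ENNReal.ofReal_toReal]
    exact ENNReal.rpow_ne_top_of_nonneg (by norm_num) hVtop
  have hsplit : ∫⁻ x in E, (ENNReal.ofReal (dist x y))⁻¹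
      ≤ (∫⁻ x in Metric.ball y ρ, (ENNReal.ofReal (dist x y))⁻¹)
        + ∫⁻ x in E \ Metric.ball y ρ, (ENNReal.ofReal (dist x y))⁻¹ := by
    calc ∫⁻ x in E, (ENNReal.ofReal (dist x y))⁻¹
        ≤ ∫⁻ x in Metric.ball y ρ ∪ (E \ Metric.ball y ρ), (ENNReal.ofReal (dist x y))⁻¹ := by
          apply lintegral_mono_set
          intro x hx
          by_cases h : x ∈ Metric.ball y ρ
          · exact Or.inl h
          · exact Or.inr ⟨hx, h⟩
      _ ≤ _ := lintegral_union_le _ _ _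
  have houter : ∫⁻ x in E \ Metric.ball y ρ, (ENNReal.ofReal (dist x y))⁻¹
      ≤ ENNReal.ofReal ρ := by
    rcases eq_or_lt_of_le hρ with hρ0 | hρpos
    · have hV0 : V = 0 := by rw [hVρ, ← hρ0]; simp
      have : volume (E \ Metric.ball y ρ) = 0 :=
        le_antisymm (le_trans (measure_mono Set.diff_subset) hV0.le) zero_le
      calc ∫⁻ x in E \ Metric.ball y ρ, (ENNReal.ofReal (dist x y))⁻¹
          ≤ ∫⁻ _ in E \ Metric.ball y ρ, ∞ := lintegral_mono fun _ => le_top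
        _ = ∞ * volume (E \ Metric.ball y ρ) := setLIntegral_const _ _
        _ = 0 := by rw [this, mul_zero]
        _ ≤ _ := zero_le
    · calc ∫⁻ x in E \ Metric.ball y ρ, (ENNReal.ofReal (dist x y))⁻¹
          ≤ ∫⁻ _ in E \ Metric.ball y ρ, (ENNReal.ofReal ρ)⁻¹ := by
            apply setLIntegral_mono measurable_const
            intro x hx
            have : ρ ≤ dist x y := not_lt.mp fun h => hx.2 (Metric.mem_ball.mpr h)
            exact ENNReal.inv_le_inv.mpr (ENNReal.ofReal_le_ofReal this)
        _ = (ENNReal.ofReal ρ)⁻¹ * volume (E \ Metric.ball y ρ) := setLIntegral_const _ _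
        _ ≤ (ENNReal.ofReal ρ)⁻¹ * V := by
            gcongr
            exact measure_mono Set.diff_subset
        _ = (ENNReal.ofReal ρ)⁻¹ * (ENNReal.ofReal ρ * ENNReal.ofReal ρ) := by
            rw [hVρ, sq, ENNReal.ofReal_mul hρ]
        _ = ENNReal.ofReal ρ := by
            rw [← mul_assoc, ENNReal.inv_mul_cancel (by simpa using hρpos) ENNReal.ofReal_ne_top,
              one_mul]
  calc ∫⁻ x in E, (ENNReal.ofReal (dist x y))⁻¹
      ≤ (∫⁻ x in Metric.ball y ρ, (ENNReal.ofReal (dist x y))⁻¹)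
        + ∫⁻ x in E \ Metric.ball y ρ, (ENNReal.ofReal (dist x y))⁻¹ := hsplit
    _ ≤ ENNReal.ofReal (16 * ρ) + ENNReal.ofReal ρ := add_le_add (ball_lintegral y hρ) houter
    _ ≤ 17 * V ^ ((1:ℝ)/2) := by
        rw [hhalf, ← ENNReal.ofReal_add (by positivity) hρ]
        rw [show (16 * ρ + ρ) = 17 * ρ by ring, ENNReal.ofReal_mul (by norm_num)]
        gcongr
        simp


/-- The Biot–Savart operator K maps finite signed regular Borel measures on the
closed half plane boundedly into weak-L²(ℝ²₊): Kμ is measurable on ℝ²₊ and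
sup_{λ>0} λ · |{x ∈ ℝ²₊ : |Kμ(x)| > λ}|^{1/2} ≤ C‖μ‖_M. -/
theorem biotSavart_weakL2 :
    ∃ C > (0:ℝ), ∀ μ : SignedMeasure (ℝ × ℝ),
      μ.totalVariation {x : ℝ × ℝ | x.2 < 0} = 0 →
      μ.totalVariation.Regular →
      AEStronglyMeasurable (fun x => sIntV μ (fun y => bsKernel x y)) (volume.restrict upperHalf)
        ∧
      ∀ l > (0:ℝ),
        l * (volume {x | x ∈ upperHalf ∧ l < ‖sIntV μ (fun y => bsKernel x y)‖}).toReal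
              ^ ((1:ℝ)/2)
          ≤ C * normM μ := by
  refine ⟨17, by norm_num, ?_⟩
  intro μ hμ _hreg
  set P := μ.toJordanDecomposition.posPart with hPdef
  set N := μ.toJordanDecomposition.negPart with hNdef
  set ν := μ.totalVariation with hνdef
  haveI hνfin : IsFiniteMeasure ν := by
    rw [hνdef, SignedMeasure.totalVariation]
    infer_instance
  have hbs : StronglyMeasurable (Function.uncurry bsKernel) :=
    measurable_bsKernel.stronglyMeasurable
  have hKP : StronglyMeasurable fun x => ∫ y, bsKernel x y ∂P := hbs.integral_prod_right
  have hKN : StronglyMeasurable fun x => ∫ y, bsKernel x y ∂N := hbs.integral_prod_right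
  have hK : StronglyMeasurable (fun x => sIntV μ (fun y => bsKernel x y)) := by
    exact hKP.sub hKN
  refine ⟨hK.aestronglyMeasurable, ?_⟩
  intro l hl
  have hpt : ∀ x, ENNReal.ofReal ‖sIntV μ (fun y => bsKernel x y)‖
      ≤ ∫⁻ y, ENNReal.ofReal ‖bsKernel x y‖ ∂ν := by
    intro x
    have hP' := norm_integral_le_lintegral_norm (μ := P) (fun y => bsKernel x y)
    have hN' := norm_integral_le_lintegral_norm (μ := N) (fun y => bsKernel x y)
    calc ENNReal.ofReal ‖sIntV μ (fun y => bsKernel x y)‖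
        ≤ ENNReal.ofReal (‖∫ y, bsKernel x y ∂P‖ + ‖∫ y, bsKernel x y ∂N‖) :=
          ENNReal.ofReal_le_ofReal (norm_sub_le _ _)
      _ ≤ ENNReal.ofReal ‖∫ y, bsKernel x y ∂P‖ + ENNReal.ofReal ‖∫ y, bsKernel x y ∂N‖ :=
          ENNReal.ofReal_add_le
      _ ≤ (∫⁻ y, ENNReal.ofReal ‖bsKernel x y‖ ∂P) + ∫⁻ y, ENNReal.ofReal ‖bsKernel x y‖ ∂N :=
          add_le_add (le_trans (ENNReal.ofReal_le_ofReal hP') ENNReal.ofReal_toReal_le)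
            (le_trans (ENNReal.ofReal_le_ofReal hN') ENNReal.ofReal_toReal_le)
      _ = ∫⁻ y, ENNReal.ofReal ‖bsKernel x y‖ ∂(P + N) := (lintegral_add_measure _ _ _).symm
      _ = ∫⁻ y, ENNReal.ofReal ‖bsKernel x y‖ ∂ν := rfl
  set Kf := fun x => sIntV μ (fun y => bsKernel x y) with hKf
  set E := {x | x ∈ upperHalf ∧ l < ‖Kf x‖} with hE
  have hEmeas : MeasurableSet E := by
    have h1 : MeasurableSet upperHalf := measurableSet_lt measurable_const measurable_snd
    have h2 : MeasurableSet {x : ℝ × ℝ | l < ‖Kf x‖} :=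
      measurableSet_lt measurable_const hK.measurable.norm
    exact h1.inter h2
  set V := volume E with hV
  rcases eq_or_ne V ∞ with htop | hfin
  · rw [htop, ENNReal.toReal_top, Real.zero_rpow (by norm_num), mul_zero]
    have : (0:ℝ) ≤ normM μ := ENNReal.toReal_nonneg
    linarith
  have hG : Measurable (fun p : (ℝ × ℝ) × (ℝ × ℝ) => (ENNReal.ofReal (dist p.1 p.2))⁻¹) :=
    measurable_dist.ennreal_ofReal.inv
  have hae : ∀ᵐ y ∂ν, 0 ≤ y.2 := by
    rw [ae_iff]
    have hset : {y : ℝ × ℝ | ¬ 0 ≤ y.2} = {y : ℝ × ℝ | y.2 < 0} := by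
      ext y; simp [not_le]
    rw [hset]
    exact hμ
  have hKbound : ∀ x ∈ E, ENNReal.ofReal ‖Kf x‖
      ≤ ∫⁻ y, (ENNReal.ofReal (dist x y))⁻¹ ∂ν := by
    intro x hx
    refine le_trans (hpt x) (lintegral_mono_ae ?_)
    exact hae.mono fun y hy => bsKernel_bound hx.1 hy
  have chain : ENNReal.ofReal l * V ≤ 17 * V ^ ((1:ℝ)/2) * ν Set.univ := by
    calc ENNReal.ofReal l * V = ∫⁻ _ in E, ENNReal.ofReal l := (setLIntegral_const _ _).symm
      _ ≤ ∫⁻ x in E, ∫⁻ y, (ENNReal.ofReal (dist x y))⁻¹ ∂ν := by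
          apply setLIntegral_mono hG.lintegral_prod_right'
          intro x hx
          exact le_trans (ENNReal.ofReal_le_ofReal hx.2.le) (hKbound x hx)
      _ = ∫⁻ y, (∫⁻ x in E, (ENNReal.ofReal (dist x y))⁻¹) ∂ν := by
          exact lintegral_lintegral_swap (μ := volume.restrict E) (ν := ν)
            (f := fun x y => (ENNReal.ofReal (dist x y))⁻¹) hG.aemeasurable
      _ ≤ ∫⁻ _, 17 * V ^ ((1:ℝ)/2) ∂ν := by
          refine lintegral_mono fun y => ?_
          rw [hV]
          exact key_lintegral y E
      _ = 17 * V ^ ((1:ℝ)/2) * ν Set.univ := lintegral_const _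
  rcases eq_or_ne V 0 with hV0 | hV0
  · rw [hV0, ENNReal.toReal_zero, Real.zero_rpow (by norm_num), mul_zero]
    have : (0:ℝ) ≤ normM μ := ENNReal.toReal_nonneg
    linarith
  · have hpow0 : V ^ ((1:ℝ)/2) ≠ 0 := by
      simp [ENNReal.rpow_eq_zero_iff, hV0, hfin]
    have hpowtop : V ^ ((1:ℝ)/2) ≠ ∞ := ENNReal.rpow_ne_top_of_nonneg (by norm_num) hfin
    have hVsplit : V = V ^ ((1:ℝ)/2) * V ^ ((1:ℝ)/2) := by
      rw [← ENNReal.rpow_add _ _ hV0 hfin]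
      norm_num
    have hc : ENNReal.ofReal l * V ^ ((1:ℝ)/2) ≤ 17 * ν Set.univ := by
      have h2 : (ENNReal.ofReal l * V ^ ((1:ℝ)/2)) * V ^ ((1:ℝ)/2)
          ≤ (17 * ν Set.univ) * V ^ ((1:ℝ)/2) := by
        calc (ENNReal.ofReal l * V ^ ((1:ℝ)/2)) * V ^ ((1:ℝ)/2)
            = ENNReal.ofReal l * V := by rw [mul_assoc, ← hVsplit]
          _ ≤ 17 * V ^ ((1:ℝ)/2) * ν Set.univ := chain
          _ = (17 * ν Set.univ) * V ^ ((1:ℝ)/2) := by ring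
      exact (ENNReal.mul_le_mul_iff_left hpow0 hpowtop).mp h2
    have hRfin : (17 : ℝ≥0∞) * ν Set.univ ≠ ∞ :=
      ENNReal.mul_ne_top (by simp) (measure_ne_top ν _)
    have final := ENNReal.toReal_mono hRfin hc
    rw [ENNReal.toReal_mul, ENNReal.toReal_ofReal hl.le, ← ENNReal.toReal_rpow,
      ENNReal.toReal_mul] at final
    simpa [normM] using final

end
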